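/- Let a, s, d be non-negative integers such that s ≤ a, s ≤ d, and a+s+d+1 is not divisible by 3. Then there exists a unique (3, a+s+d+1)-Dyck path Π with area(Π) = a, skips(Π) = s, and dinv(Π) = d. -/

import Mathlib

open MvPolynomial

/-- An `(m,n)`-Dyck path: a north/east lattice path from `(0,0)` to `(m,n)` staying
weakly above the diagonal `y = (n/m)x`.  Such a path is encoded by recording, for each
of the `m` columns (indexed `0,…,m-1` from left to right), the number of cells of that
column lying above the path; this gives an antitone sequence, and the diagonal
condition for the east step in column `i` reads `m * c i ≤ n * (m - 1 - i)`. -/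
def DyckPath (m n : ℕ) : Type :=
  {c : Fin m → Fin (n + 1) //
    (∀ i j : Fin m, i ≤ j → (c j : ℕ) ≤ (c i : ℕ)) ∧
      ∀ i : Fin m, m * (c i : ℕ) ≤ n * (m - 1 - (i : ℕ))}

noncomputable instance instFintypeDyckPath (m n : ℕ) : Fintype (DyckPath m n) := by
  classical
  unfold DyckPath
  infer_instance

namespace DyckPath

variable {m n : ℕ}

/-- `λ(Π)`, the set of cells of the `m × n` lattice lying above the path `Π`.
The cell `(i, j)` (with `i : Fin m`, `j : Fin n`) is the cell in column `i + 1`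
(from the left) and row `j + 1` (from the bottom) in the paper's 1-based indexing. -/
def cellsAbove (P : DyckPath m n) : Set (Fin m × Fin n) :=
  {x | n - (P.1 x.1 : ℕ) ≤ (x.2 : ℕ)}

/-- `arm(x)`: the number of cells of `λ(Π)` strictly east of `x` (in the row of `x`). -/
noncomputable def arm (P : DyckPath m n) (x : Fin m × Fin n) : ℕ :=
  {y ∈ P.cellsAbove | x.1 < y.1 ∧ y.2 = x.2}.ncard

/-- `leg(x)`: the number of cells of `λ(Π)` strictly south of `x` (in the column of `x`). -/
noncomputable def leg (P : DyckPath m n) (x : Fin m × Fin n) : ℕ :=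
  {y ∈ P.cellsAbove | y.1 = x.1 ∧ y.2 < x.2}.ncard

end DyckPath

/-- The dinv condition `arm/(leg+1) < m/n < (arm+1)/leg` for a cell with given arm `a`
and leg `l`, the right inequality being interpreted as true when `l = 0`. -/
def dinvCond (m n a l : ℕ) : Prop :=
  (a : ℚ) / ((l : ℚ) + 1) < (m : ℚ) / (n : ℚ) ∧
    (l = 0 ∨ (m : ℚ) / (n : ℚ) < ((a : ℚ) + 1) / (l : ℚ))

namespace DyckPath

variable {m n : ℕ}

/-- `dinv(Π)`: the number of cells `x ∈ λ(Π)` with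
`arm(x)/(leg(x)+1) < m/n < (arm(x)+1)/leg(x)`. -/
noncomputable def dinv (P : DyckPath m n) : ℕ :=
  {x ∈ P.cellsAbove | dinvCond m n (P.arm x) (P.leg x)}.ncard

/-- `area(Π)`: the number of cells of the lattice lying entirely between the path and
the diagonal, i.e. cells lying entirely weakly above the diagonal `y = (n/m)x` and
below the path. -/
noncomputable def area (P : DyckPath m n) : ℕ :=
  {x : Fin m × Fin n | n * ((x.1 : ℕ) + 1) ≤ m * (x.2 : ℕ) ∧ x ∉ P.cellsAbove}.ncard

end DyckPath

/-- The `(m,n)`-rational `q,t`-Catalan polynomial `C_{m,n}(q,t)`, with `q = X 0` and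
`t = X 1`:  `C_{m,n}(q,t) = Σ_Π q^{dinv(Π)} t^{area(Π)}` over all `(m,n)`-Dyck paths. -/
noncomputable def ratCatalan (m n : ℕ) : MvPolynomial (Fin 2) ℤ :=
  ∑ P : DyckPath m n, X 0 ^ P.dinv * X 1 ^ P.area

/-- The rank of the cell `(i, j)` of the `3 × n` lattice: in the paper's 1-based
coordinates `(a, b) = (i+1, j+1)`, this is `R(a,b) = -a·n + 3(b-1)`. -/
def cellRank (n : ℕ) (x : Fin 3 × Fin n) : ℤ :=
  3 * (x.2 : ℤ) - ((x.1 : ℤ) + 1) * (n : ℤ)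

/-- The set of positive ranks of the `3 × n` lattice: these, in increasing order, are
the entries of the rank word. -/
def posRank (n : ℕ) : Set ℤ :=
  {r | 0 < r ∧ ∃ x : Fin 3 × Fin n, cellRank n x = r}

/-- The set of marked ranks of a `(3,n)`-Dyck path: the ranks of the cells above
the path. -/
def markedRank {n : ℕ} (P : DyckPath 3 n) : Set ℤ :=
  cellRank n '' P.cellsAbove

/-- `skips(Π)`: the number of skips of `Π`, i.e. of maximal blocks of consecutive
unmarked entries of the rank word of `Π` having at least one marked entry to the left
and at least one marked entry to the right.  Each such block is counted through its
rightmost entry `r`: `r` is an unmarked entry, some marked entry lies to its left, and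
the next entry of the rank word after `r` is marked. -/
noncomputable def DyckPath.skips {n : ℕ} (P : DyckPath 3 n) : ℕ :=
  {r : ℤ | r ∈ posRank n ∧ r ∉ markedRank P ∧
    (∃ l ∈ markedRank P, l < r) ∧
    ∃ s ∈ markedRank P, r < s ∧ ∀ t ∈ posRank n, r < t → s ≤ t}.ncard

open Finset

-- counting helper: sum of indicator over Fin n equals two-interval count
lemma sum_ite_interval2 {n : ℕ} (p : ℕ → Prop) [DecidablePred p] (A B C D : ℕ)
    (h : ∀ j, j < n → (p j ↔ (A ≤ j ∧ j < B) ∨ (C ≤ j ∧ j < D)))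
    (hB : B ≤ n) (hD : D ≤ n) (hBC : B ≤ C) :
    (∑ j : Fin n, if p (j : ℕ) then 1 else 0) = (B - A) + (D - C) := by
  rw [Fin.sum_univ_eq_sum_range (fun j => if p j then 1 else 0) n, ← Finset.card_filter]
  have hset : (Finset.range n).filter p = Finset.Ico A B ∪ Finset.Ico C D := by
    ext j
    simp only [Finset.mem_filter, Finset.mem_range, Finset.mem_union, Finset.mem_Ico]
    constructor
    · rintro ⟨hj, hp⟩; exact (h j hj).1 hp
    · intro hj
      have hjn : j < n := by omega
      exact ⟨hjn, (h j hjn).2 hj⟩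
  rw [hset, Finset.card_union_of_disjoint, Nat.card_Ico, Nat.card_Ico]
  rw [Finset.disjoint_left]
  intro x hx hx'
  simp only [Finset.mem_Ico] at hx hx'
  omega

lemma ncard_filter_eq {α : Type*} [Fintype α] (p : α → Prop) [DecidablePred p] :
    {x | p x}.ncard = ∑ x : α, if p x then 1 else 0 := by
  rw [Set.ncard_eq_toFinset_card', Set.toFinset_setOf, Finset.card_filter]

namespace DyckPath

lemma basic {n : ℕ} (P : DyckPath 3 n) :
    (P.1 2 : ℕ) = 0 ∧ (P.1 1 : ℕ) ≤ (P.1 0 : ℕ) ∧ 3 * (P.1 1 : ℕ) ≤ n ∧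
      3 * (P.1 0 : ℕ) ≤ 2 * n := by
  obtain ⟨hmono, hdiag⟩ := P.2
  have h2 := hdiag 2
  have h1 := hdiag 1
  have h0 := hdiag 0
  have h01 := hmono 0 1 (by decide)
  simp only [Fin.isValue, Fin.val_two, Fin.val_one, Fin.val_zero] at h2 h1 h0
  norm_num at h2 h1 h0
  exact ⟨by
    have h2' := P.2.2 2
    have h2v : ((2 : Fin 3) : ℕ) = 2 := rfl
    rw [h2v] at h2'
    simp only [show (3:ℕ) - 1 - 2 = 0 from rfl, Nat.mul_zero] at h2'
    omega, h01, by omega, by omega⟩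

lemma mem_cellsAbove_iff {n : ℕ} (P : DyckPath 3 n) (x : Fin 3 × Fin n) :
    x ∈ P.cellsAbove ↔ n - (P.1 x.1 : ℕ) ≤ (x.2 : ℕ) := Iff.rfl

lemma area_formula {n : ℕ} (hn : ¬ (3 ∣ n)) (P : DyckPath 3 n) :
    P.area = n - 1 - (P.1 0 : ℕ) - (P.1 1 : ℕ) := by
  classical
  obtain ⟨h2, h01, h1, h0⟩ := P.basic
  rw [DyckPath.area]
  rw [ncard_filter_eq (fun x : Fin 3 × Fin n =>
    n * ((x.1 : ℕ) + 1) ≤ 3 * (x.2 : ℕ) ∧ x ∉ P.cellsAbove)]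
  rw [Fintype.sum_prod_type, Fin.sum_univ_three]
  simp only [mem_cellsAbove_iff, Fin.val_zero, Fin.val_one, Fin.val_two]
  rw [sum_ite_interval2 (fun j => n * (0 + 1) ≤ 3 * j ∧ ¬ n - (P.1 0 : ℕ) ≤ j)
      (n/3 + 1) (n - (P.1 0 : ℕ)) (n - (P.1 0 : ℕ)) (n - (P.1 0 : ℕ))
      (by intro j hj; omega) (by omega) (by omega) le_rfl]
  rw [sum_ite_interval2 (fun j => n * (1 + 1) ≤ 3 * j ∧ ¬ n - (P.1 1 : ℕ) ≤ j)
      (n - n/3) (n - (P.1 1 : ℕ)) (n - (P.1 1 : ℕ)) (n - (P.1 1 : ℕ))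
      (by intro j hj; omega) (by omega) (by omega) le_rfl]
  rw [sum_ite_interval2 (fun j => n * (2 + 1) ≤ 3 * j ∧ ¬ n - (P.1 2 : ℕ) ≤ j)
      0 0 0 0 (by intro j hj; rw [h2]; omega) (by omega) (by omega) le_rfl]
  omega

end DyckPath
lemma dinvCond_iff {n : ℕ} (hn : 0 < n) (a l : ℕ) :
    dinvCond 3 n a l ↔ (a * n < 3 * (l + 1) ∧ (l = 0 ∨ 3 * l < n * (a + 1))) := by
  unfold dinvCond
  have hn' : (0:ℚ) < (n:ℚ) := by exact_mod_cast hn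
  apply and_congr
  · rw [div_lt_div_iff₀ (by positivity) hn']
    constructor <;> intro h <;> exact_mod_cast h
  · constructor
    · rintro (h0 | h)
      · exact Or.inl h0
      · by_cases hl : l = 0
        · exact Or.inl hl
        · have hl' : (0:ℚ) < (l:ℚ) := by
            have := Nat.pos_of_ne_zero hl; exact_mod_cast this
          rw [div_lt_div_iff₀ hn' hl'] at h
          right; rw [mul_comm n (a+1)]; exact_mod_cast h
    · rintro (h0 | h)
      · exact Or.inl h0
      · by_cases hl : l = 0
        · exact Or.inl hl
        · have hl' : (0:ℚ) < (l:ℚ) := by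
            have := Nat.pos_of_ne_zero hl; exact_mod_cast this
          right; rw [div_lt_div_iff₀ hn' hl', mul_comm ((a:ℚ)+1) (n:ℚ)]
          exact_mod_cast h

namespace DyckPath

lemma mem_cellsAbove_iff' {n : ℕ} (P : DyckPath 3 n) (i : Fin 3) (j : Fin n) :
    (i, j) ∈ P.cellsAbove ↔ n - (P.1 i : ℕ) ≤ (j : ℕ) := Iff.rfl

lemma arm_eq0 {n : ℕ} (P : DyckPath 3 n) (j : Fin n) :
    P.arm ((0 : Fin 3), j) = if n - (P.1 1 : ℕ) ≤ (j : ℕ) then 1 else 0 := by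
  obtain ⟨h2, h01, h1, h0⟩ := P.basic
  rw [DyckPath.arm]
  by_cases h : n - (P.1 1 : ℕ) ≤ (j : ℕ)
  · rw [if_pos h]
    convert Set.ncard_singleton ((1 : Fin 3), j) using 2
    ext ⟨i', j'⟩
    simp only [Set.mem_setOf_eq, mem_cellsAbove_iff', Set.mem_singleton_iff, Prod.mk.injEq,
      Fin.lt_def]
    constructor
    · rintro ⟨ha, hlt, hj⟩
      refine ⟨?_, hj⟩
      have hj' := j'.isLt
      have hc : i' = 0 ∨ i' = 1 ∨ i' = 2 := by omega
      rcases hc with rfl | rfl | rfl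
      · simp at hlt
      · rfl
      · rw [h2] at ha; omega
    · rintro ⟨rfl, rfl⟩
      exact ⟨h, by simp, rfl⟩
  · rw [if_neg h]
    rw [show {y ∈ P.cellsAbove | ((0 : Fin 3), j).1 < y.1 ∧ y.2 = ((0 : Fin 3), j).2} = ∅ from ?_]
    · exact Set.ncard_empty _
    · ext ⟨i', j'⟩
      simp only [Set.mem_setOf_eq, Set.mem_empty_iff_false, iff_false, not_and, Fin.lt_def]
      intro ha hlt hj
      have hj' := j'.isLt
      have hc : i' = 0 ∨ i' = 1 ∨ i' = 2 := by omega
      rcases hc with rfl | rfl | rfl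
      · simp at hlt
      · rw [mem_cellsAbove_iff'] at ha
        rw [show (j' : Fin n) = j from hj] at ha
        exact h ha
      · rw [mem_cellsAbove_iff', h2] at ha; omega

lemma arm_eq1 {n : ℕ} (P : DyckPath 3 n) (j : Fin n) :
    P.arm ((1 : Fin 3), j) = 0 := by
  obtain ⟨h2, h01, h1, h0⟩ := P.basic
  rw [DyckPath.arm]
  rw [show {y ∈ P.cellsAbove | ((1 : Fin 3), j).1 < y.1 ∧ y.2 = ((1 : Fin 3), j).2} = ∅ from ?_]
  · exact Set.ncard_empty _
  · ext ⟨i', j'⟩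
    simp only [Set.mem_setOf_eq, Set.mem_empty_iff_false, iff_false, not_and, Fin.lt_def]
    intro ha hlt hj
    have hj' := j'.isLt
    have hc : i' = 0 ∨ i' = 1 ∨ i' = 2 := by omega
    rcases hc with rfl | rfl | rfl
    · simp at hlt
    · simp at hlt
    · rw [mem_cellsAbove_iff', h2] at ha; omega

lemma leg_eq {n : ℕ} (P : DyckPath 3 n) (i : Fin 3) (j : Fin n) :
    P.leg (i, j) = (j : ℕ) - (n - (P.1 i : ℕ)) := by
  classical
  rw [DyckPath.leg]
  have hset : {y ∈ P.cellsAbove | y.1 = (i, j).1 ∧ y.2 < (i, j).2} =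
      (fun j' : Fin n => (i, j')) ''
        {j' : Fin n | n - (P.1 i : ℕ) ≤ (j' : ℕ) ∧ (j' : ℕ) < (j : ℕ)} := by
    ext ⟨i', j'⟩
    simp only [Set.mem_setOf_eq, Set.mem_image, Prod.mk.injEq, Fin.lt_def]
    constructor
    · rintro ⟨ha, rfl, hlt⟩
      exact ⟨j', ⟨ha, hlt⟩, rfl, rfl⟩
    · rintro ⟨j'', ⟨ha, hlt⟩, rfl, rfl⟩
      exact ⟨ha, rfl, hlt⟩
  rw [hset, Set.ncard_image_of_injective _ (fun a b hab => by simpa using hab)]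
  rw [ncard_filter_eq (fun j' : Fin n => n - (P.1 i : ℕ) ≤ (j' : ℕ) ∧ (j' : ℕ) < (j : ℕ))]
  rw [sum_ite_interval2 (fun t => n - (P.1 i : ℕ) ≤ t ∧ t < (j : ℕ))
      (min (n - (P.1 i : ℕ)) (j : ℕ)) (j : ℕ) (j : ℕ) (j : ℕ)
      (by intro t ht; omega) (by omega) (by omega) le_rfl]
  omega

lemma dinv_formula {n : ℕ} (hn : ¬ (3 ∣ n)) (P : DyckPath 3 n) :
    P.dinv = (P.1 1 : ℕ) + min ((P.1 0 : ℕ) - (P.1 1 : ℕ)) (n / 3 + 1)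
      + min (P.1 1 : ℕ) ((P.1 0 : ℕ) - n / 3) := by
  classical
  obtain ⟨h2, h01, h1, h0⟩ := P.basic
  have hn0 : 0 < n := by omega
  have col0 : ∀ x : Fin n,
      (((0 : Fin 3), x) ∈ P.cellsAbove ∧ dinvCond 3 n (P.arm (0, x)) (P.leg (0, x))) ↔
      ((n - (P.1 0 : ℕ) ≤ (x : ℕ) ∧
          (x : ℕ) < min (n - (P.1 1 : ℕ)) (n - (P.1 0 : ℕ) + n / 3 + 1)) ∨
        (max (n - (P.1 1 : ℕ)) (n - (P.1 0 : ℕ) + n / 3) ≤ (x : ℕ) ∧ (x : ℕ) < n)) := by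
    intro x
    rw [mem_cellsAbove_iff', arm_eq0, leg_eq, dinvCond_iff hn0]
    have hx := x.isLt
    split_ifs with h <;> omega
  have col1 : ∀ x : Fin n,
      (((1 : Fin 3), x) ∈ P.cellsAbove ∧ dinvCond 3 n (P.arm (1, x)) (P.leg (1, x))) ↔
      ((n - (P.1 1 : ℕ) ≤ (x : ℕ) ∧ (x : ℕ) < n) ∨ (n ≤ (x : ℕ) ∧ (x : ℕ) < n)) := by
    intro x
    rw [mem_cellsAbove_iff', arm_eq1, leg_eq, dinvCond_iff hn0]
    have hx := x.isLt
    omega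
  have col2 : ∀ x : Fin n,
      (((2 : Fin 3), x) ∈ P.cellsAbove ∧ dinvCond 3 n (P.arm (2, x)) (P.leg (2, x))) ↔
      ((0 ≤ (x : ℕ) ∧ (x : ℕ) < 0) ∨ (0 ≤ (x : ℕ) ∧ (x : ℕ) < 0)) := by
    intro x
    rw [mem_cellsAbove_iff', h2]
    have hx := x.isLt
    constructor
    · rintro ⟨ha, -⟩; omega
    · intro h; omega
  rw [DyckPath.dinv]
  rw [ncard_filter_eq (fun x : Fin 3 × Fin n =>
    x ∈ P.cellsAbove ∧ dinvCond 3 n (P.arm x) (P.leg x))]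
  rw [Fintype.sum_prod_type, Fin.sum_univ_three]
  simp only [col0, col1, col2]
  rw [sum_ite_interval2 _ (n - (P.1 0 : ℕ))
      (min (n - (P.1 1 : ℕ)) (n - (P.1 0 : ℕ) + n / 3 + 1))
      (max (n - (P.1 1 : ℕ)) (n - (P.1 0 : ℕ) + n / 3)) n
      (fun j hj => Iff.rfl) (by omega) (by omega) (by omega)]
  rw [sum_ite_interval2 _ (n - (P.1 1 : ℕ)) n n n
      (fun j hj => Iff.rfl) (by omega) (by omega) (by omega)]
  rw [sum_ite_interval2 _ 0 0 0 0
      (fun j hj => Iff.rfl) (by omega) (by omega) (by omega)]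
  omega

end DyckPath
lemma posRank_iff {n : ℕ} (hn : ¬ (3 ∣ n)) (r : ℤ) :
    r ∈ posRank n ↔ (0 < r ∧ ¬ ((3:ℤ) ∣ r) ∧ r ≤ 2*(n:ℤ) - 3 ∧
      ((3:ℤ) ∣ r - (n:ℤ) → r ≤ (n:ℤ) - 3)) := by
  have hn' : ¬ ((3:ℤ) ∣ (n:ℤ)) := by exact_mod_cast hn
  constructor
  · rintro ⟨hr, ⟨i, j⟩, hx⟩
    rw [cellRank] at hx
    have hi : i = 0 ∨ i = 1 ∨ i = 2 := by omega
    have hj : (j:ℕ) < n := j.isLt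
    have hmodn : (n:ℤ) % 3 = 1 ∨ (n:ℤ) % 3 = 2 := by omega
    rcases hi with rfl | rfl | rfl <;>
      simp only [Fin.isValue, Fin.val_zero, Fin.val_one, Fin.val_two] at hx <;>
      push_cast at hx <;> rcases hmodn with h | h <;> omega
  · rintro ⟨h1, h2, h3, h4⟩
    refine ⟨h1, ?_⟩
    by_cases hd : (3:ℤ) ∣ r - (n:ℤ)
    · refine ⟨(⟨1, by norm_num⟩, ⟨((r + 2*(n:ℤ))/3).toNat, by omega⟩), ?_⟩
      show 3 * ((((r + 2*(n:ℤ))/3).toNat : ℕ) : ℤ) - (((1:ℕ):ℤ) + 1) * (n:ℤ) = r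
      omega
    · have hd' : (3:ℤ) ∣ r + (n:ℤ) := by
        have a1 : r % 3 = 1 ∨ r % 3 = 2 := by omega
        have a2 : (n:ℤ) % 3 = 1 ∨ (n:ℤ) % 3 = 2 := by omega
        rcases a1 with h|h <;> rcases a2 with h'|h' <;> omega
      refine ⟨(⟨0, by norm_num⟩, ⟨((r + (n:ℤ))/3).toNat, by omega⟩), ?_⟩
      show 3 * ((((r + (n:ℤ))/3).toNat : ℕ) : ℤ) - (((0:ℕ):ℤ) + 1) * (n:ℤ) = r
      omega

namespace DyckPath

lemma marked_iff {n : ℕ} (hn : ¬ (3 ∣ n)) (P : DyckPath 3 n) (r : ℤ) :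
    r ∈ markedRank P ↔
      (((3:ℤ) ∣ r + (n:ℤ) ∧ 2*(n:ℤ) - 3*((P.1 0 : ℕ):ℤ) ≤ r ∧ r ≤ 2*(n:ℤ) - 3) ∨
       ((3:ℤ) ∣ r - (n:ℤ) ∧ (n:ℤ) - 3*((P.1 1 : ℕ):ℤ) ≤ r ∧ r ≤ (n:ℤ) - 3)) := by
  obtain ⟨h2, h01, h1, h0⟩ := P.basic
  have hn' : ¬ ((3:ℤ) ∣ (n:ℤ)) := by exact_mod_cast hn
  constructor
  · rintro ⟨⟨i, j⟩, hmem, hx⟩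
    rw [mem_cellsAbove_iff'] at hmem
    rw [cellRank] at hx
    simp only at hx
    have hj : (j:ℕ) < n := j.isLt
    have hi : i = 0 ∨ i = 1 ∨ i = 2 := by omega
    rcases hi with rfl | rfl | rfl
    · left; omega
    · right; omega
    · rw [h2] at hmem; omega
  · rintro (⟨hd, hlo, hhi⟩ | ⟨hd, hlo, hhi⟩)
    · refine ⟨((0 : Fin 3), ⟨((r + (n:ℤ))/3).toNat, by omega⟩), ?_, ?_⟩
      · rw [mem_cellsAbove_iff']
        show n - (P.1 0 : ℕ) ≤ ((r + (n:ℤ))/3).toNat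
        omega
      · show 3 * ((((r + (n:ℤ))/3).toNat : ℕ) : ℤ) - (((0:ℕ):ℤ) + 1) * (n:ℤ) = r
        omega
    · refine ⟨((1 : Fin 3), ⟨((r + 2*(n:ℤ))/3).toNat, by omega⟩), ?_, ?_⟩
      · rw [mem_cellsAbove_iff']
        show n - (P.1 1 : ℕ) ≤ ((r + 2*(n:ℤ))/3).toNat
        omega
      · show 3 * ((((r + 2*(n:ℤ))/3).toNat : ℕ) : ℤ) - (((1:ℕ):ℤ) + 1) * (n:ℤ) = r
        omega

lemma marked_sub {n : ℕ} (hn : ¬ (3 ∣ n)) (P : DyckPath 3 n) :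
    markedRank P ⊆ posRank n := by
  intro r hr
  obtain ⟨h2, h01, h1, h0⟩ := P.basic
  have hn' : ¬ ((3:ℤ) ∣ (n:ℤ)) := by exact_mod_cast hn
  rw [marked_iff hn P] at hr
  rw [posRank_iff hn]
  omega

end DyckPath

/-- the successor of a rank `r` in the rank word -/
def nextRank (n : ℕ) (r : ℤ) : ℤ :=
  if (3:ℤ) ∣ r - (n:ℤ) then r + ((n % 3 : ℕ) : ℤ)
  else if r + 3 - ((n % 3 : ℕ) : ℤ) ≤ (n:ℤ) - 3 then r + 3 - ((n % 3 : ℕ) : ℤ) else r + 3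

lemma nextRank_spec {n : ℕ} (hn : ¬ (3 ∣ n)) (r : ℤ) (hr : r ∈ posRank n)
    (htop : r < 2*(n:ℤ) - 3) :
    nextRank n r ∈ posRank n ∧ r < nextRank n r ∧
      ∀ t ∈ posRank n, r < t → nextRank n r ≤ t := by
  have hn' : ¬ ((3:ℤ) ∣ (n:ℤ)) := by exact_mod_cast hn
  rw [posRank_iff hn] at hr
  have hmodn : (n:ℤ) % 3 = 1 ∨ (n:ℤ) % 3 = 2 := by omega
  have hmodr : r % 3 = 1 ∨ r % 3 = 2 := by omega
  refine ⟨?_, ?_, ?_⟩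
  · rw [posRank_iff hn]; unfold nextRank; split_ifs <;>
      rcases hmodn with h|h <;> rcases hmodr with h'|h' <;> omega
  · unfold nextRank; split_ifs <;> omega
  · intro t ht hrt
    rw [posRank_iff hn] at ht
    have hmodt : t % 3 = 1 ∨ t % 3 = 2 := by omega
    unfold nextRank; split_ifs <;>
      rcases hmodn with h|h <;> rcases hmodr with h'|h' <;> rcases hmodt with h''|h'' <;> omega

namespace DyckPath

lemma skip_mem_iff {n : ℕ} (hn : ¬ (3 ∣ n)) (P : DyckPath 3 n) (r : ℤ) :
    (r ∈ posRank n ∧ r ∉ markedRank P ∧ (∃ l ∈ markedRank P, l < r) ∧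
      ∃ s ∈ markedRank P, r < s ∧ ∀ t ∈ posRank n, r < t → s ≤ t)
    ↔ (r ∈ posRank n ∧ r ∉ markedRank P ∧ (∃ l ∈ markedRank P, l < r) ∧
        r < 2*(n:ℤ) - 3 ∧ nextRank n r ∈ markedRank P) := by
  constructor
  · rintro ⟨hp, hm, hl, s, hsM, hrs, hmin⟩
    have hs' := (posRank_iff hn s).1 (marked_sub hn P hsM)
    have htop : r < 2*(n:ℤ) - 3 := by omega
    obtain ⟨hnp, hngt, hnmin⟩ := nextRank_spec hn r hp htop
    have hse : s = nextRank n r :=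
      le_antisymm (hmin _ hnp hngt) (hnmin s (marked_sub hn P hsM) hrs)
    exact ⟨hp, hm, hl, htop, hse ▸ hsM⟩
  · rintro ⟨hp, hm, hl, htop, hnM⟩
    obtain ⟨hnp, hngt, hnmin⟩ := nextRank_spec hn r hp htop
    exact ⟨hp, hm, hl, nextRank n r, hnM, hngt, hnmin⟩

end DyckPath
section SkipArith

set_option maxHeartbeats 1000000

/-- arithmetic core: in the empty cases there are no skips -/
private lemma skipE_arith (n c0 c1 : ℕ) (r l : ℤ)
    (hn' : ¬((3:ℤ) ∣ (n:ℤ)))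
    (h01 : c1 ≤ c0) (h1 : 3*c1 ≤ n) (h0 : 3*c0 ≤ 2*n)
    (hE : (c1 = 0 ∧ c0 ≤ n/3) ∨ c0 = c1 + n/3)
    (hp0 : 0 < r) (hp1 : ¬((3:ℤ) ∣ r)) (hp2 : r ≤ 2*(n:ℤ)-3)
    (hp3 : (3:ℤ) ∣ r-(n:ℤ) → r ≤ (n:ℤ)-3)
    (hunm : ¬(((3:ℤ) ∣ r+(n:ℤ) ∧ 2*(n:ℤ)-3*(c0:ℤ) ≤ r ∧ r ≤ 2*(n:ℤ)-3) ∨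
      ((3:ℤ) ∣ r-(n:ℤ) ∧ (n:ℤ)-3*(c1:ℤ) ≤ r ∧ r ≤ (n:ℤ)-3)))
    (hlM : ((3:ℤ) ∣ l+(n:ℤ) ∧ 2*(n:ℤ)-3*(c0:ℤ) ≤ l ∧ l ≤ 2*(n:ℤ)-3) ∨
      ((3:ℤ) ∣ l-(n:ℤ) ∧ (n:ℤ)-3*(c1:ℤ) ≤ l ∧ l ≤ (n:ℤ)-3))
    (hlr : l < r)
    (hnext : ((3:ℤ) ∣ (nextRank n r)+(n:ℤ) ∧ 2*(n:ℤ)-3*(c0:ℤ) ≤ nextRank n r ∧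
        nextRank n r ≤ 2*(n:ℤ)-3) ∨
      ((3:ℤ) ∣ (nextRank n r)-(n:ℤ) ∧ (n:ℤ)-3*(c1:ℤ) ≤ nextRank n r ∧
        nextRank n r ≤ (n:ℤ)-3)) : False := by
  have hn3 : (n:ℤ) % 3 = 1 ∨ (n:ℤ) % 3 = 2 := by omega
  have hr3 : r % 3 = 1 ∨ r % 3 = 2 := by omega
  unfold nextRank at hnext
  rcases hlM with ⟨hl1, hl2, hl3⟩ | ⟨hl1, hl2, hl3⟩ <;>
    split_ifs at hnext <;> rcases hn3 with h|h <;> rcases hr3 with h'|h' <;> omega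

/-- arithmetic core for case B -/
private lemma skipB_arith (n c0 c1 : ℕ) (r l : ℤ)
    (hn' : ¬((3:ℤ) ∣ (n:ℤ)))
    (h01 : c1 ≤ c0) (h1 : 3*c1 ≤ n) (h0 : 3*c0 ≤ 2*n)
    (hB : c1 + n/3 + 1 ≤ c0)
    (hp0 : 0 < r) (hp1 : ¬((3:ℤ) ∣ r)) (hp2 : r ≤ 2*(n:ℤ)-3)
    (hp3 : (3:ℤ) ∣ r-(n:ℤ) → r ≤ (n:ℤ)-3)
    (hunm : ¬(((3:ℤ) ∣ r+(n:ℤ) ∧ 2*(n:ℤ)-3*(c0:ℤ) ≤ r ∧ r ≤ 2*(n:ℤ)-3) ∨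
      ((3:ℤ) ∣ r-(n:ℤ) ∧ (n:ℤ)-3*(c1:ℤ) ≤ r ∧ r ≤ (n:ℤ)-3)))
    (hlM : ((3:ℤ) ∣ l+(n:ℤ) ∧ 2*(n:ℤ)-3*(c0:ℤ) ≤ l ∧ l ≤ 2*(n:ℤ)-3) ∨
      ((3:ℤ) ∣ l-(n:ℤ) ∧ (n:ℤ)-3*(c1:ℤ) ≤ l ∧ l ≤ (n:ℤ)-3))
    (hlr : l < r)
    (hnext : ((3:ℤ) ∣ (nextRank n r)+(n:ℤ) ∧ 2*(n:ℤ)-3*(c0:ℤ) ≤ nextRank n r ∧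
        nextRank n r ≤ 2*(n:ℤ)-3) ∨
      ((3:ℤ) ∣ (nextRank n r)-(n:ℤ) ∧ (n:ℤ)-3*(c1:ℤ) ≤ nextRank n r ∧
        nextRank n r ≤ (n:ℤ)-3)) :
    ∃ u : ℕ, u < c0 - n/3 - 1 - c1 ∧ (n:ℤ) - 3*((c1:ℤ)+1+(u:ℤ)) = r := by
  have hn3 : (n:ℤ) % 3 = 1 ∨ (n:ℤ) % 3 = 2 := by omega
  have hr3 : r % 3 = 1 ∨ r % 3 = 2 := by omega
  unfold nextRank at hnext
  have key : (3:ℤ) ∣ (n:ℤ) - r ∧ 3*((c1:ℤ)+1) ≤ (n:ℤ) - r ∧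
      (n:ℤ) - r < 3*((c0:ℤ) - (n:ℤ)/3 - 1 - (c1:ℤ)) + 3*((c1:ℤ)+1) := by
    rcases hlM with ⟨hl1, hl2, hl3⟩ | ⟨hl1, hl2, hl3⟩ <;>
      split_ifs at hnext <;> rcases hn3 with h|h <;> rcases hr3 with h'|h' <;> omega
  refine ⟨((n:ℤ) - r).toNat / 3 - (c1 + 1), by omega, by omega⟩

/-- arithmetic core for case AC -/
private lemma skipAC_arith (n c0 c1 : ℕ) (r l : ℤ)
    (hn' : ¬((3:ℤ) ∣ (n:ℤ)))
    (h01 : c1 ≤ c0) (h1 : 3*c1 ≤ n) (h0 : 3*c0 ≤ 2*n)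
    (hnE : ¬((c1 = 0 ∧ c0 ≤ n/3) ∨ c0 = c1 + n/3))
    (hnB : ¬(c1 + n/3 + 1 ≤ c0))
    (hp0 : 0 < r) (hp1 : ¬((3:ℤ) ∣ r)) (hp2 : r ≤ 2*(n:ℤ)-3)
    (hp3 : (3:ℤ) ∣ r-(n:ℤ) → r ≤ (n:ℤ)-3)
    (hunm : ¬(((3:ℤ) ∣ r+(n:ℤ) ∧ 2*(n:ℤ)-3*(c0:ℤ) ≤ r ∧ r ≤ 2*(n:ℤ)-3) ∨
      ((3:ℤ) ∣ r-(n:ℤ) ∧ (n:ℤ)-3*(c1:ℤ) ≤ r ∧ r ≤ (n:ℤ)-3)))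
    (hlM : ((3:ℤ) ∣ l+(n:ℤ) ∧ 2*(n:ℤ)-3*(c0:ℤ) ≤ l ∧ l ≤ 2*(n:ℤ)-3) ∨
      ((3:ℤ) ∣ l-(n:ℤ) ∧ (n:ℤ)-3*(c1:ℤ) ≤ l ∧ l ≤ (n:ℤ)-3))
    (hlr : l < r)
    (hnext : ((3:ℤ) ∣ (nextRank n r)+(n:ℤ) ∧ 2*(n:ℤ)-3*(c0:ℤ) ≤ nextRank n r ∧
        nextRank n r ≤ 2*(n:ℤ)-3) ∨
      ((3:ℤ) ∣ (nextRank n r)-(n:ℤ) ∧ (n:ℤ)-3*(c1:ℤ) ≤ nextRank n r ∧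
        nextRank n r ≤ (n:ℤ)-3)) :
    r = 2*(n:ℤ) - 3*(c0:ℤ) - 3 ∨
      ∃ u : ℕ, u < c1 - max (c0 - n/3 + 1) 1 ∧
        (n:ℤ) + ((n % 3 : ℕ) : ℤ) - 3 - 3*((max (c0 - n/3 + 1) 1 : ℕ) : ℤ) - 3*(u:ℤ) = r := by
  have hn3 : (n:ℤ) % 3 = 1 ∨ (n:ℤ) % 3 = 2 := by omega
  have hr3 : r % 3 = 1 ∨ r % 3 = 2 := by omega
  by_cases hsing : r = 2*(n:ℤ) - 3*(c0:ℤ) - 3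
  · exact Or.inl hsing
  right
  unfold nextRank at hnext
  have key : (3:ℤ) ∣ ((n:ℤ) + ((n % 3 : ℕ) : ℤ) - 3 - r) ∧
      3*((max (c0 - n/3 + 1) 1 : ℕ) : ℤ) ≤ (n:ℤ) + ((n % 3 : ℕ) : ℤ) - 3 - r ∧
      (n:ℤ) + ((n % 3 : ℕ) : ℤ) - 3 - r <
        3*((c1:ℤ) - ((max (c0 - n/3 + 1) 1 : ℕ) : ℤ)) + 3*((max (c0 - n/3 + 1) 1 : ℕ) : ℤ) := by
    rcases hlM with ⟨hl1, hl2, hl3⟩ | ⟨hl1, hl2, hl3⟩ <;>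
      split_ifs at hnext <;> rcases hn3 with h|h <;> rcases hr3 with h'|h' <;> omega
  refine ⟨((n:ℤ) + ((n % 3 : ℕ) : ℤ) - 3 - r).toNat / 3 - max (c0 - n/3 + 1) 1,
    by omega, by omega⟩

end SkipArith
namespace DyckPath

set_option maxHeartbeats 1000000

private lemma skips_setE {n : ℕ} (hn : ¬ (3 ∣ n)) (P : DyckPath 3 n)
    (hE : ((P.1 1 : ℕ) = 0 ∧ (P.1 0 : ℕ) ≤ n/3) ∨ (P.1 0 : ℕ) = (P.1 1 : ℕ) + n/3) :
    {r : ℤ | r ∈ posRank n ∧ r ∉ markedRank P ∧ (∃ l ∈ markedRank P, l < r) ∧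
      ∃ s ∈ markedRank P, r < s ∧ ∀ t ∈ posRank n, r < t → s ≤ t} = (∅ : Set ℤ) := by
  obtain ⟨h2, h01, h1, h0⟩ := P.basic
  have hn' : ¬ ((3:ℤ) ∣ (n:ℤ)) := by exact_mod_cast hn
  ext r
  simp only [Set.mem_setOf_eq, Set.mem_empty_iff_false, iff_false]
  intro hmem
  rw [skip_mem_iff hn P r] at hmem
  obtain ⟨hp, hunm, ⟨l, hlM, hlr⟩, htop, hnext⟩ := hmem
  rw [posRank_iff hn] at hp
  obtain ⟨hp0, hp1, hp2, hp3⟩ := hp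
  rw [marked_iff hn P] at hunm hlM hnext
  exact skipE_arith n (P.1 0 : ℕ) (P.1 1 : ℕ) r l hn' h01 h1 h0 hE hp0 hp1 hp2 hp3
    hunm hlM hlr hnext

private lemma skips_setB {n : ℕ} (hn : ¬ (3 ∣ n)) (P : DyckPath 3 n)
    (hB : (P.1 1 : ℕ) + n/3 + 1 ≤ (P.1 0 : ℕ)) :
    {r : ℤ | r ∈ posRank n ∧ r ∉ markedRank P ∧ (∃ l ∈ markedRank P, l < r) ∧
      ∃ s ∈ markedRank P, r < s ∧ ∀ t ∈ posRank n, r < t → s ≤ t} =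
    ↑((Finset.range ((P.1 0 : ℕ) - n/3 - 1 - (P.1 1 : ℕ))).image
        (fun u : ℕ => (n:ℤ) - 3*(((P.1 1 : ℕ) : ℤ) + 1 + (u:ℤ)))) := by
  obtain ⟨h2, h01, h1, h0⟩ := P.basic
  have hn' : ¬ ((3:ℤ) ∣ (n:ℤ)) := by exact_mod_cast hn
  have hn3 : (n:ℤ) % 3 = 1 ∨ (n:ℤ) % 3 = 2 := by omega
  ext r
  simp only [Set.mem_setOf_eq, Finset.coe_image, Set.mem_image, Finset.mem_coe,
    Finset.mem_range]
  rw [skip_mem_iff hn P r]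
  constructor
  · rintro ⟨hp, hunm, ⟨l, hlM, hlr⟩, htop, hnext⟩
    rw [posRank_iff hn] at hp
    obtain ⟨hp0, hp1, hp2, hp3⟩ := hp
    rw [marked_iff hn P] at hunm hlM hnext
    exact skipB_arith n (P.1 0 : ℕ) (P.1 1 : ℕ) r l hn' h01 h1 h0 hB hp0 hp1 hp2 hp3
      hunm hlM hlr hnext
  · rintro ⟨u, hu, rfl⟩
    refine ⟨?_, ?_, ⟨2*(n:ℤ) - 3*((P.1 0 : ℕ):ℤ), ?_, ?_⟩, ?_, ?_⟩
    · rw [posRank_iff hn]; rcases hn3 with h|h <;> omega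
    · rw [marked_iff hn P]; rcases hn3 with h|h <;> omega
    · rw [marked_iff hn P]; rcases hn3 with h|h <;> omega
    · rcases hn3 with h|h <;> omega
    · rcases hn3 with h|h <;> omega
    · rw [marked_iff hn P]; unfold nextRank; split_ifs <;>
        rcases hn3 with h|h <;> omega

private lemma skips_setAC {n : ℕ} (hn : ¬ (3 ∣ n)) (P : DyckPath 3 n)
    (hnE : ¬(((P.1 1 : ℕ) = 0 ∧ (P.1 0 : ℕ) ≤ n/3) ∨ (P.1 0 : ℕ) = (P.1 1 : ℕ) + n/3))
    (hnB : ¬((P.1 1 : ℕ) + n/3 + 1 ≤ (P.1 0 : ℕ))) :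
    {r : ℤ | r ∈ posRank n ∧ r ∉ markedRank P ∧ (∃ l ∈ markedRank P, l < r) ∧
      ∃ s ∈ markedRank P, r < s ∧ ∀ t ∈ posRank n, r < t → s ≤ t} =
    ↑(insert (2*(n:ℤ) - 3*((P.1 0 : ℕ):ℤ) - 3)
      ((Finset.range ((P.1 1 : ℕ) - max ((P.1 0 : ℕ) - n/3 + 1) 1)).image
        (fun u : ℕ => (n:ℤ) + ((n % 3 : ℕ) : ℤ) - 3
          - 3*((max ((P.1 0 : ℕ) - n/3 + 1) 1 : ℕ) : ℤ) - 3*(u:ℤ)))) := by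
  obtain ⟨h2, h01, h1, h0⟩ := P.basic
  have hn' : ¬ ((3:ℤ) ∣ (n:ℤ)) := by exact_mod_cast hn
  have hn3 : (n:ℤ) % 3 = 1 ∨ (n:ℤ) % 3 = 2 := by omega
  ext r
  simp only [Set.mem_setOf_eq, Finset.coe_insert, Set.mem_insert_iff,
    Finset.coe_image, Set.mem_image, Finset.mem_coe, Finset.mem_range]
  rw [skip_mem_iff hn P r]
  constructor
  · rintro ⟨hp, hunm, ⟨l, hlM, hlr⟩, htop, hnext⟩
    rw [posRank_iff hn] at hp
    obtain ⟨hp0, hp1, hp2, hp3⟩ := hp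
    rw [marked_iff hn P] at hunm hlM hnext
    exact skipAC_arith n (P.1 0 : ℕ) (P.1 1 : ℕ) r l hn' h01 h1 h0 hnE hnB
      hp0 hp1 hp2 hp3 hunm hlM hlr hnext
  · rintro (rfl | ⟨u, hu, rfl⟩)
    · refine ⟨?_, ?_, ⟨(n:ℤ) - 3*((P.1 1 : ℕ):ℤ), ?_, ?_⟩, ?_, ?_⟩
      · rw [posRank_iff hn]; rcases hn3 with h|h <;> omega
      · rw [marked_iff hn P]; rcases hn3 with h|h <;> omega
      · rw [marked_iff hn P]; rcases hn3 with h|h <;> omega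
      · rcases hn3 with h|h <;> omega
      · rcases hn3 with h|h <;> omega
      · rw [marked_iff hn P]; unfold nextRank; split_ifs <;>
          rcases hn3 with h|h <;> omega
    · refine ⟨?_, ?_, ⟨(n:ℤ) - 3*((P.1 1 : ℕ):ℤ), ?_, ?_⟩, ?_, ?_⟩
      · rw [posRank_iff hn]; rcases hn3 with h|h <;> omega
      · rw [marked_iff hn P]; rcases hn3 with h|h <;> omega
      · rw [marked_iff hn P]; rcases hn3 with h|h <;> omega
      · rcases hn3 with h|h <;> omega
      · rcases hn3 with h|h <;> omega
      · rw [marked_iff hn P]; unfold nextRank; split_ifs <;>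
          rcases hn3 with h|h <;> omega

lemma skips_formula {n : ℕ} (hn : ¬ (3 ∣ n)) (P : DyckPath 3 n) :
    P.skips = (P.1 0 : ℕ) - min ((P.1 0 : ℕ) - (P.1 1 : ℕ)) (n / 3 + 1)
      - min (P.1 1 : ℕ) ((P.1 0 : ℕ) - n / 3) := by
  classical
  obtain ⟨h2, h01, h1, h0⟩ := P.basic
  rw [DyckPath.skips]
  by_cases hE : ((P.1 1 : ℕ) = 0 ∧ (P.1 0 : ℕ) ≤ n/3) ∨ (P.1 0 : ℕ) = (P.1 1 : ℕ) + n/3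
  · rw [skips_setE hn P hE, Set.ncard_empty]
    omega
  · by_cases hB : (P.1 1 : ℕ) + n/3 + 1 ≤ (P.1 0 : ℕ)
    · rw [skips_setB hn P hB, Set.ncard_coe_finset,
        Finset.card_image_of_injective _ (fun a b hab => by
          simp only at hab; omega : Function.Injective
            (fun u : ℕ => (n:ℤ) - 3*(((P.1 1 : ℕ) : ℤ) + 1 + (u:ℤ)))),
        Finset.card_range]
      omega
    · have hn3 : (n:ℤ) % 3 = 1 ∨ (n:ℤ) % 3 = 2 := by
        have hn' : ¬ ((3:ℤ) ∣ (n:ℤ)) := by exact_mod_cast hn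
        omega
      rw [skips_setAC hn P hE hB, Set.ncard_coe_finset,
        Finset.card_insert_of_notMem (by
          simp only [Finset.mem_image, Finset.mem_range]
          rintro ⟨u, hu, hval⟩
          rcases hn3 with h|h <;> omega),
        Finset.card_image_of_injective _ (fun a b hab => by
          simp only at hab; omega : Function.Injective
            (fun u : ℕ => (n:ℤ) + ((n % 3 : ℕ) : ℤ) - 3
              - 3*((max ((P.1 0 : ℕ) - n/3 + 1) 1 : ℕ) : ℤ) - 3*(u:ℤ))),
        Finset.card_range]
      omega

end DyckPath
set_option maxHeartbeats 1000000 in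
/-- For non-negative integers `a, s, d` with `s ≤ a`, `s ≤ d` and
`3 ∤ a+s+d+1`, there is a unique `(3, a+s+d+1)`-Dyck path with area `a`, skips `s`
and dinv `d`. -/
theorem existsUnique_dyckPath_of_triple (a s d : ℕ) (hsa : s ≤ a) (hsd : s ≤ d)
    (h3 : ¬ (3 ∣ (a + s + d + 1))) :
    ∃! P : DyckPath 3 (a + s + d + 1), P.area = a ∧ P.skips = s ∧ P.dinv = d := by
  classical
  set n := a + s + d + 1 with hn
  have hc : ∃ c0 c1 : ℕ, c1 ≤ c0 ∧ 3*c1 ≤ n ∧ 3*c0 ≤ 2*n ∧ n - 1 - c0 - c1 = a ∧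
      c0 - min (c0 - c1) (n/3+1) - min c1 (c0 - n/3) = s ∧
      c1 + min (c0 - c1) (n/3+1) + min c1 (c0 - n/3) = d := by
    rcases le_or_gt d (n/3) with h | h
    · refine ⟨d, s, ?_, ?_, ?_, ?_, ?_, ?_⟩ <;> omega
    · rcases Nat.even_or_odd (d - n/3) with ⟨m, hm⟩ | ⟨m, hm⟩
      · refine ⟨n/3 + m, s + m, ?_, ?_, ?_, ?_, ?_, ?_⟩ <;> omega
      · refine ⟨s + n/3 + 1 + m, m, ?_, ?_, ?_, ?_, ?_, ?_⟩ <;> omega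
  obtain ⟨c0, c1, h01, h1, h0, harea, hskips, hdinv⟩ := hc
  have hc0lt : c0 < n + 1 := by omega
  have hc1lt : c1 < n + 1 := by omega
  have h0lt : 0 < n + 1 := by omega
  set cf : Fin 3 → Fin (n+1) := ![⟨c0, hc0lt⟩, ⟨c1, hc1lt⟩, ⟨0, h0lt⟩] with hcf
  have hv0 : (cf 0 : ℕ) = c0 := rfl
  have hv1 : (cf 1 : ℕ) = c1 := rfl
  have hv2 : (cf 2 : ℕ) = 0 := rfl
  have hmono : ∀ i j : Fin 3, i ≤ j → (cf j : ℕ) ≤ (cf i : ℕ) := by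
    intro i j hij
    have hi : i = 0 ∨ i = 1 ∨ i = 2 := by omega
    have hj : j = 0 ∨ j = 1 ∨ j = 2 := by omega
    rcases hi with rfl | rfl | rfl <;> rcases hj with rfl | rfl | rfl <;>
      simp only [hv0, hv1, hv2] <;>
      first
        | omega
        | exact absurd hij (by decide)
  have hdiag : ∀ i : Fin 3, 3 * (cf i : ℕ) ≤ n * (3 - 1 - (i : ℕ)) := by
    intro i
    have hi : i = 0 ∨ i = 1 ∨ i = 2 := by omega
    rcases hi with rfl | rfl | rfl
    · rw [hv0]; show 3 * c0 ≤ n * (3 - 1 - 0); omega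
    · rw [hv1]; show 3 * c1 ≤ n * (3 - 1 - 1); omega
    · rw [hv2]; show 3 * 0 ≤ n * (3 - 1 - 2); omega
  set P : DyckPath 3 n := ⟨cf, hmono, hdiag⟩ with hP
  have hp0 : (P.1 0 : ℕ) = c0 := rfl
  have hp1 : (P.1 1 : ℕ) = c1 := rfl
  refine ⟨P, ⟨?_, ?_, ?_⟩, ?_⟩
  · rw [DyckPath.area_formula h3 P, hp0, hp1]; omega
  · rw [DyckPath.skips_formula h3 P, hp0, hp1]; omega
  · rw [DyckPath.dinv_formula h3 P, hp0, hp1]; omega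
  · rintro Q ⟨hqa, hqs, hqd⟩
    obtain ⟨g2, g01, g1, g0⟩ := Q.basic
    rw [DyckPath.area_formula h3 Q] at hqa
    rw [DyckPath.dinv_formula h3 Q] at hqd
    have e0 : (Q.1 0 : ℕ) = c0 ∧ (Q.1 1 : ℕ) = c1 := by omega
    apply Subtype.ext
    funext i
    have hi : i = 0 ∨ i = 1 ∨ i = 2 := by omega
    have hP2 : (P.1 2 : ℕ) = 0 := rfl
    rcases hi with rfl | rfl | rfl <;> apply Fin.ext
    · rw [hp0]; omega
    · rw [hp1]; omega
    · rw [hP2]; omega
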